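/- Let M be a finitely generated integral commutative monoid, T the torsion subgroup of M^gp, and N the image of M in M^gp/T. Then the saturation of N inside M^gp/T is a fine, saturated, torsion-free monoid, and for every element a of this saturation there exist b ∈ N and a positive integer m with b = m·a. -/

import Mathlib

lemma exists_coeffs_of_mem_closure {Q : Type*} [AddCommMonoid Q] [DecidableEq Q] {s : Finset Q}
    {x : Q} (hx : x ∈ AddSubmonoid.closure (s : Set Q)) :
    ∃ a : Q → ℕ, x = ∑ v ∈ s, a v • v := by
  obtain ⟨l, hl, rfl⟩ := AddSubmonoid.exists_multiset_of_mem_closure hx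
  refine ⟨fun v => l.count v, ?_⟩
  have hrep : l.sum = ∑ v ∈ l.toFinset, l.count v • v := by
    conv_lhs => rw [← Multiset.map_id l]
    exact Finset.sum_multiset_map_count l id
  rw [hrep]
  refine Finset.sum_subset (fun v hv => hl v (Multiset.mem_toFinset.mp hv)) ?_
  intro v _ hv
  rw [Multiset.count_eq_zero_of_notMem (by simpa using hv), zero_smul]

lemma bounded_repr_finite {Q : Type*} [AddCommGroup Q] [Module.Free ℤ Q] [Module.Finite ℤ Q]
    (C : Module.Free.ChooseBasisIndex ℤ Q → ℤ) :
    {y : Q | ∀ j, |(Module.Free.chooseBasis ℤ Q).repr y j| ≤ C j}.Finite := by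
  set b := Module.Free.chooseBasis ℤ Q
  have hinj : Function.Injective (fun y : Q => fun j => b.repr y j) := by
    intro y z h
    apply b.repr.injective
    ext j
    exact congrFun h j
  have hfin : (Set.pi Set.univ fun j => Set.Icc (-C j) (C j)).Finite :=
    Set.Finite.pi fun j => Set.finite_Icc _ _
  refine Set.Finite.subset (Set.Finite.preimage hinj.injOn hfin) ?_
  intro y hy
  simp only [Set.mem_preimage, Set.mem_pi, Set.mem_univ, forall_true_left, Set.mem_Icc]
  intro j
  exact abs_le.mp (hy j)

/-- The saturation of an additive submonoid `M` of an abelian group `G`: the elements `g`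
such that `n • g ∈ M` for some positive integer `n`. -/
def AddSubmonoid.saturationOld {G : Type*} [AddCommGroup G] (M : AddSubmonoid G) :
    AddSubmonoid G where
  carrier := {g | ∃ n : ℕ, 0 < n ∧ n • g ∈ M}
  zero_mem' := ⟨1, one_pos, by simpa using M.zero_mem⟩
  add_mem' := by
    rintro a b ⟨n, hn, ha⟩ ⟨m, hm, hb⟩
    refine ⟨n * m, Nat.mul_pos hn hm, ?_⟩
    have h1 : (n * m) • a ∈ M := by
      rw [mul_comm, mul_smul]; exact AddSubmonoid.nsmul_mem M ha m
    have h2 : (n * m) • b ∈ M := by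
      rw [mul_smul]; exact AddSubmonoid.nsmul_mem M hb n
    rw [smul_add]; exact M.add_mem h1 h2

/-- Let `M` be a finitely generated integral commutative monoid, realized as
a submonoid of its Grothendieck group `G`, let `T` be the torsion subgroup of `G = M^gp`, and
let `N` be the image of `M` in `G ⧸ T`.  Then the saturation of `N` inside `G ⧸ T` is a fine
(finitely generated), saturated, torsion-free monoid, and every element `a` of this saturation
admits `b ∈ N` and a positive integer `m` with `b = m • a`. -/
theorem saturation_mod_torsion_fine_saturated_torsionFree
    {G : Type*} [AddCommGroup G] (M : AddSubmonoid G) (hfg : M.FG)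
    (hgp : ∀ g : G, ∃ a ∈ M, ∃ b ∈ M, g = a - b) :
    let T := AddCommGroup.torsion G
    let N := M.map (QuotientAddGroup.mk' T)
    N.saturationOld.FG ∧
    (∀ g : G ⧸ T, (∃ n : ℕ, 0 < n ∧ n • g ∈ N.saturationOld) → g ∈ N.saturationOld) ∧
    (∀ g : G ⧸ T, g ≠ 0 → ¬IsOfFinAddOrder g) ∧
    (∀ a ∈ N.saturationOld, ∃ b ∈ N, ∃ m : ℕ, 0 < m ∧ b = m • a) := by
  intro T N
  classical
  -- torsion-freeness of the quotient
  have hTF : ∀ g : G ⧸ T, g ≠ 0 → ¬IsOfFinAddOrder g := fun g hg => not_isOfFinAddOrder_of_isAddTorsionFree hg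
  -- the quotient is a finitely generated group
  obtain ⟨s, hs⟩ := hfg
  have htop : AddSubgroup.closure (s : Set G) = ⊤ := by
    rw [AddSubgroup.eq_top_iff']
    intro g
    obtain ⟨a, ha, b, hb, rfl⟩ := hgp g
    have hsub : M ≤ (AddSubgroup.closure (s : Set G)).toAddSubmonoid := by
      rw [← hs]
      exact AddSubmonoid.closure_le.mpr AddSubgroup.subset_closure
    exact sub_mem (hsub ha) (hsub hb)
  haveI hGfg : AddGroup.FG G := AddGroup.fg_iff.mpr ⟨s, htop, s.finite_toSet⟩
  haveI hQfg : AddGroup.FG (G ⧸ T) := QuotientAddGroup.fg T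
  haveI : Module.Finite ℤ (G ⧸ T) := Module.Finite.iff_addGroup_fg.mpr hQfg
  haveI : NoZeroSMulDivisors ℤ (G ⧸ T) := inferInstance
  -- the free basis
  let b := Module.Free.chooseBasis ℤ (G ⧸ T)
  -- the image monoid is generated by the image of `s`
  let f := QuotientAddGroup.mk' T
  let s' : Finset (G ⧸ T) := s.image f
  have hN : N = AddSubmonoid.closure (s' : Set (G ⧸ T)) := by
    show AddSubmonoid.map f M = _
    rw [← hs, AddMonoidHom.map_mclosure]
    congr 1
    simp [s', Finset.coe_image]
  have hs'N : ∀ v ∈ s', v ∈ N := by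
    intro v hv
    rw [hN]
    exact AddSubmonoid.subset_closure hv
  have hs'sat : ∀ v ∈ s', v ∈ N.saturationOld := fun v hv =>
    ⟨1, one_pos, by simpa using hs'N v hv⟩
  -- the bounding constants
  let C : Module.Free.ChooseBasisIndex ℤ (G ⧸ T) → ℤ := fun j => ∑ v ∈ s', |b.repr v j|
  let B : Set (G ⧸ T) := {y | y ∈ N.saturationOld ∧ ∀ j, |b.repr y j| ≤ C j}
  have hBfin : B.Finite := (bounded_repr_finite C).subset fun y hy => hy.2
  -- the generation claim
  have hgen : N.saturationOld = AddSubmonoid.closure ((s' : Set (G ⧸ T)) ∪ B) := by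
    apply le_antisymm
    · intro x hx
      obtain ⟨m, hm, hmx⟩ := hx
      rw [hN] at hmx
      obtain ⟨a, hax⟩ := exists_coeffs_of_mem_closure hmx
      set P : G ⧸ T := ∑ v ∈ s', (a v / m) • v with hP
      set y : G ⧸ T := x - P with hy
      have hmy : m • y = ∑ v ∈ s', (a v % m) • v := by
        have hsplit : (∑ v ∈ s', a v • v) = m • P + ∑ v ∈ s', (a v % m) • v := by
          rw [hP, Finset.smul_sum, ← Finset.sum_add_distrib]
          refine Finset.sum_congr rfl fun v _ => ?_
          rw [smul_smul, ← add_smul]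
          congr 1
          exact (Nat.div_add_mod (a v) m).symm
        rw [hy, smul_sub, hax, hsplit]
        abel
      have hmyN : m • y ∈ N := by
        rw [hmy, hN]
        exact AddSubmonoid.sum_mem _ fun v hv =>
          AddSubmonoid.nsmul_mem _ (AddSubmonoid.subset_closure hv) _
      have hysat : y ∈ N.saturationOld := ⟨m, hm, hmyN⟩
      have hyB : y ∈ B := by
        refine ⟨hysat, fun j => ?_⟩
        have hrepr : (m : ℤ) * b.repr y j = ∑ v ∈ s', ((a v % m : ℕ) : ℤ) * b.repr v j := by
          have := congrArg (fun z : G ⧸ T => b.repr z j) hmy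
          simpa [map_nsmul, map_sum, Finsupp.smul_apply, Finsupp.finset_sum_apply,
            nsmul_eq_mul] using this
        have hb : (m : ℤ) * |b.repr y j| ≤ (m : ℤ) * C j := by
          have habs : (m : ℤ) * |b.repr y j| = |(m : ℤ) * b.repr y j| := by
            rw [abs_mul, abs_of_nonneg (by positivity : (0:ℤ) ≤ (m:ℤ))]
          rw [habs, hrepr]
          calc |∑ v ∈ s', ((a v % m : ℕ) : ℤ) * b.repr v j|
              ≤ ∑ v ∈ s', |((a v % m : ℕ) : ℤ) * b.repr v j| := Finset.abs_sum_le_sum_abs _ _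
            _ ≤ ∑ v ∈ s', (m : ℤ) * |b.repr v j| := by
                refine Finset.sum_le_sum fun v _ => ?_
                rw [abs_mul, Nat.abs_cast]
                have : ((a v % m : ℕ) : ℤ) ≤ (m : ℤ) := by
                  exact_mod_cast (Nat.mod_lt _ hm).le
                exact mul_le_mul_of_nonneg_right this (abs_nonneg _)
            _ = (m : ℤ) * C j := by rw [Finset.mul_sum]
        exact le_of_mul_le_mul_left hb (by exact_mod_cast hm)
      have hxPy : x = P + y := by rw [hy]; abel
      rw [hxPy]
      refine AddSubmonoid.add_mem _ ?_ ?_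
      · refine AddSubmonoid.sum_mem _ fun v hv => AddSubmonoid.nsmul_mem _ ?_ _
        exact AddSubmonoid.subset_closure (Set.mem_union_left _ (Finset.mem_coe.mpr hv))
      · exact AddSubmonoid.subset_closure (Or.inr hyB)
    · rw [AddSubmonoid.closure_le]
      rintro v (hv | hv)
      · exact hs'sat v hv
      · exact hv.1
  refine ⟨?_, ?_, hTF, ?_⟩
  · exact (AddSubmonoid.fg_iff _).mpr ⟨(s' : Set (G ⧸ T)) ∪ B, hgen.symm, s'.finite_toSet.union hBfin⟩
  · rintro g ⟨n, hn, m, hm, hmn⟩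
    exact ⟨m * n, Nat.mul_pos hm hn, by rwa [mul_smul]⟩
  · rintro a ⟨n, hn, hna⟩
    exact ⟨n • a, hna, n, hn, rfl⟩
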